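/- arXiv:2011.07324 — 3 statements merged into one kernel-verified Lean document; each statement's English description precedes it below -/
import Mathlib

section
/- For every fixed z ∈ [0,1], the function g(s) = (e^{(z−1)s} − e^{−s})/(1 − e^{−s}) is non-increasing on (0,∞). -/
open Real Set

lemma pgf_hasDerivAt (z s : ℝ) (hs : (0:ℝ) < s) :
    HasDerivAt (fun s : ℝ =>
      (Real.exp ((z - 1) * s) - Real.exp (-s)) / (1 - Real.exp (-s)))
      ((((z-1) * Real.exp ((z-1)*s) + Real.exp (-s)) * (1 - Real.exp (-s)) -
        (Real.exp ((z-1)*s) - Real.exp (-s)) * Real.exp (-s)) / (1 - Real.exp (-s))^2) s := by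
  have hb : Real.exp (-s) < 1 := by
    rw [Real.exp_lt_one_iff]; linarith
  have hD0 : 1 - Real.exp (-s) ≠ 0 := by linarith
  have h1 : HasDerivAt (fun s : ℝ => Real.exp ((z-1)*s)) (Real.exp ((z-1)*s) * (z-1)) s :=
    by simpa using ((hasDerivAt_id s).const_mul (z-1)).exp
  have h2 : HasDerivAt (fun s : ℝ => Real.exp (-s)) (Real.exp (-s) * (-1)) s :=
    by simpa using (hasDerivAt_id s).neg.exp
  have hN := h1.sub h2
  have hD := (hasDerivAt_const s (1:ℝ)).sub h2
  have := hN.div hD hD0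
  refine this.congr_deriv ?_
  simp only [Pi.sub_apply]
  ring

lemma key_ineq (z s : ℝ) (hz : z ∈ Set.Icc (0:ℝ) 1) :
    1 ≤ z * Real.exp ((z-1)*s) + (1-z) * Real.exp (z*s) := by
  obtain ⟨hz0, hz1⟩ := hz
  have h := convexOn_exp.2 (Set.mem_univ ((z-1)*s)) (Set.mem_univ (z*s)) hz0
    (by linarith : (0:ℝ) ≤ 1 - z) (by ring)
  simp only [smul_eq_mul] at h
  have : z * ((z-1)*s) + (1-z) * (z*s) = 0 := by ring
  rw [this, Real.exp_zero] at h
  exact h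

/-- For every fixed `z ∈ [0,1]`, the function
`s ↦ (e^{(z-1)s} - e^{-s}) / (1 - e^{-s})` is non-increasing on `(0, ∞)`. -/
theorem conditioned_poisson_pgf_antitone (z : ℝ) (hz : z ∈ Set.Icc (0 : ℝ) 1) :
    AntitoneOn (fun s : ℝ =>
      (Real.exp ((z - 1) * s) - Real.exp (-s)) / (1 - Real.exp (-s))) (Set.Ioi 0) := by
  apply antitoneOn_of_deriv_nonpos (convex_Ioi 0)
  · exact fun x hx => (pgf_hasDerivAt z x hx).continuousAt.continuousWithinAt
  · rw [interior_Ioi]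
    exact fun x hx => (pgf_hasDerivAt z x hx).differentiableAt.differentiableWithinAt
  · rw [interior_Ioi]
    intro x hx
    rw [(pgf_hasDerivAt z x hx).deriv]
    have hb : Real.exp (-x) < 1 := by rw [Real.exp_lt_one_iff]; exact neg_neg_iff_pos.mpr hx
    have hbpos : 0 < Real.exp (-x) := Real.exp_pos _
    have hDsq : 0 < (1 - Real.exp (-x))^2 := pow_pos (by linarith) 2
    apply div_nonpos_of_nonpos_of_nonneg _ hDsq.le
    have hK := key_ineq z x hz
    have hab : Real.exp ((z-1)*x) = Real.exp (z*x) * Real.exp (-x) := by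
      rw [← Real.exp_add]; ring_nf
    set a := Real.exp ((z-1)*x)
    set b := Real.exp (-x)
    set c := Real.exp (z*x)
    have h2 : 0 ≤ z * a + (1 - z) * c - 1 := by linarith
    have h4 := mul_nonneg hbpos.le h2
    have h5 : b * (z * a + (1 - z) * c - 1) = z * a * b + (1 - z) * (c * b) - b := by ring
    rw [h5, ← hab] at h4
    nlinarith [h4]
end

section
/- Let (Xₙ) be a sequence of ℕ-valued random variables and X an ℕ-valued random variable such that the probability generating functions converge pointwise: E[z^{Xₙ}] → E[z^X] for every z ∈ [0,1). Then Xₙ converges to X in distribution; that is, P[Xₙ = k] → P[X = k] as n → ∞ for every k ∈ ℕ. -/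
open MeasureTheory Filter

set_option linter.unusedSectionVars false

section AuxLemmas

variable {Ω : Type*} [MeasurableSpace Ω] {μ : Measure Ω} [IsProbabilityMeasure μ]

lemma aux_meas (X : Ω → ℕ) (hX : Measurable X) (z : ℝ) :
    Measurable fun ω => z ^ X ω := measurable_from_nat.comp hX

lemma aux_int (X : Ω → ℕ) (hX : Measurable X) {z : ℝ} (hz0 : 0 ≤ z) (hz1 : z ≤ 1) :
    Integrable (fun ω => z ^ X ω) μ := by
  refine (integrable_const (1 : ℝ)).mono' ((aux_meas X hX z).aestronglyMeasurable) ?_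
  filter_upwards with ω
  rw [Real.norm_eq_abs, abs_of_nonneg (pow_nonneg hz0 _)]
  exact pow_le_one₀ hz0 hz1

lemma aux_piece (X : Ω → ℕ) (hX : Measurable X) (z : ℝ) (j : ℕ) :
    ∫ ω in {ω | X ω = j}, z ^ X ω ∂μ = z ^ j * (μ {ω | X ω = j}).toReal := by
  have hm : MeasurableSet {ω | X ω = j} := hX (measurableSet_singleton _)
  rw [setIntegral_congr_fun (g := fun _ => z ^ j) hm
    (fun ω hω => by simp [Set.mem_setOf_eq.mp hω]), setIntegral_const, smul_eq_mul, mul_comm, measureReal_def]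

lemma aux_split (X : Ω → ℕ) (hX : Measurable X) {z : ℝ} (hz0 : 0 ≤ z) (hz1 : z ≤ 1) (k : ℕ) :
    ∫ ω, z ^ X ω ∂μ = (∑ j ∈ Finset.range (k+1), z ^ j * (μ {ω | X ω = j}).toReal)
      + ∫ ω in {ω | k < X ω}, z ^ X ω ∂μ := by
  induction k with
  | zero =>
    have hs : MeasurableSet {ω | X ω = 0} := hX (measurableSet_singleton 0)
    have hc : {ω | X ω = 0}ᶜ = {ω | 0 < X ω} := by
      ext ω; simp [pos_iff_ne_zero]
    rw [← integral_add_compl hs (aux_int X hX hz0 hz1), aux_piece X hX, hc]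
    simp
  | succ k ih =>
    rw [ih]
    have hset : {ω | k < X ω} = {ω | X ω = k + 1} ∪ {ω | k + 1 < X ω} := by
      ext ω; simp only [Set.mem_setOf_eq, Set.mem_union]; omega
    have hd : Disjoint {ω | X ω = k + 1} {ω | k + 1 < X ω} := by
      rw [Set.disjoint_left]; intro ω h1 h2; simp only [Set.mem_setOf_eq] at *; omega
    have hm2 : MeasurableSet {ω | k + 1 < X ω} := hX measurableSet_Ioi
    rw [hset, setIntegral_union hd hm2 ((aux_int X hX hz0 hz1).integrableOn)
      ((aux_int X hX hz0 hz1).integrableOn), aux_piece X hX, Finset.sum_range_succ _ (k+1)]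
    ring

lemma aux_tail (X : Ω → ℕ) (hX : Measurable X) {z : ℝ} (hz0 : 0 ≤ z) (hz1 : z ≤ 1) (k : ℕ) :
    ∫ ω in {ω | k < X ω}, z ^ X ω ∂μ ∈ Set.Icc 0 (z ^ (k+1)) := by
  have hm : MeasurableSet {ω | k < X ω} := hX measurableSet_Ioi
  constructor
  · exact setIntegral_nonneg hm (fun ω _ => pow_nonneg hz0 _)
  · calc ∫ ω in {ω | k < X ω}, z ^ X ω ∂μ ≤ ∫ _ω in {ω | k < X ω}, z ^ (k+1) ∂μ := by
          refine setIntegral_mono_on ((aux_int X hX hz0 hz1).integrableOn)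
            (integrableOn_const (measure_lt_top _ _).ne) hm (fun ω hω => ?_)
          exact pow_le_pow_of_le_one hz0 hz1 (Set.mem_setOf_eq.mp hω)
      _ = (μ {ω | k < X ω}).toReal * z ^ (k+1) := by rw [setIntegral_const, smul_eq_mul, measureReal_def]
      _ ≤ 1 * z ^ (k+1) := by
          refine mul_le_mul_of_nonneg_right ?_ (pow_nonneg hz0 _)
          exact ENNReal.toReal_le_of_le_ofReal zero_le_one (by simp [prob_le_one])
      _ = z ^ (k+1) := one_mul _


end AuxLemmas

/-- If the probability generating functions of ℕ-valued random variables `Xₙ` converge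
pointwise on `[0, 1)` to the probability generating function of an ℕ-valued random
variable `X`, then `Xₙ` converges to `X` in distribution, i.e.
`P[Xₙ = k] → P[X = k]` for every `k`. -/
theorem pgf_convergence_implies_convergence_in_distribution
    {Ω : Type*} [MeasurableSpace Ω] (μ : Measure Ω) [IsProbabilityMeasure μ]
    (X : ℕ → Ω → ℕ) (Y : Ω → ℕ)
    (hX : ∀ n, Measurable (X n)) (hY : Measurable Y)
    (h : ∀ z ∈ Set.Ico (0 : ℝ) 1,
      Tendsto (fun n => ∫ ω, z ^ X n ω ∂μ) atTop (nhds (∫ ω, z ^ Y ω ∂μ))) :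
    ∀ k : ℕ, Tendsto (fun n => (μ {ω | X n ω = k}).toReal) atTop
      (nhds ((μ {ω | Y ω = k}).toReal)) := by
  set p : ℕ → ℕ → ℝ := fun n k => (μ {ω | X n ω = k}).toReal with hp
  set q : ℕ → ℝ := fun k => (μ {ω | Y ω = k}).toReal with hq
  intro k
  induction k using Nat.strong_induction_on with
  | _ k IH =>
  have hd0 : Tendsto (fun n => p n k - q k) atTop (nhds 0) := by
    rw [NormedAddCommGroup.tendsto_nhds_zero]
    intro ε hε
    set z : ℝ := min (ε/4) (1/2) with hzdef
    have hz0 : 0 < z := lt_min (by linarith) (by norm_num)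
    have hz1 : z < 1 := lt_of_le_of_lt (min_le_right _ _) (by norm_num)
    have hzε : z ≤ ε/4 := min_le_left _ _
    have hzk : 0 < z ^ k := pow_pos hz0 k
    -- key algebraic identity
    have key : ∀ n, (p n k - q k) * z ^ k =
        ((∫ ω, z ^ X n ω ∂μ) - ∫ ω, z ^ Y ω ∂μ)
        - (∑ j ∈ Finset.range k, z ^ j * (p n j - q j))
        - ((∫ ω in {ω | k < X n ω}, z ^ X n ω ∂μ) - ∫ ω in {ω | k < Y ω}, z ^ Y ω ∂μ) := by
      intro n
      have e1 := aux_split (μ := μ) (X n) (hX n) hz0.le hz1.le k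
      have e2 := aux_split (μ := μ) Y hY hz0.le hz1.le k
      rw [Finset.sum_range_succ] at e1 e2
      have eB : ∑ j ∈ Finset.range k, z ^ j * (p n j - q j)
          = (∑ j ∈ Finset.range k, z ^ j * p n j) - ∑ j ∈ Finset.range k, z ^ j * q j := by
        rw [← Finset.sum_sub_distrib]; exact Finset.sum_congr rfl (fun j _ => by ring)
      rw [e1, e2, eB]
      simp only [hp, hq]
      ring
    -- convergences
    have hA : Tendsto (fun n => (∫ ω, z ^ X n ω ∂μ) - ∫ ω, z ^ Y ω ∂μ) atTop (nhds 0) := by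
      simpa using (h z ⟨hz0.le, hz1⟩).sub (tendsto_const_nhds (x := ∫ ω, z ^ Y ω ∂μ))
    have hB : Tendsto (fun n => ∑ j ∈ Finset.range k, z ^ j * (p n j - q j)) atTop (nhds 0) := by
      have : Tendsto (fun n => ∑ j ∈ Finset.range k, z ^ j * (p n j - q j)) atTop
          (nhds (∑ j ∈ Finset.range k, z ^ j * (q j - q j))) := by
        refine tendsto_finset_sum _ (fun j hj => ?_)
        exact tendsto_const_nhds.mul ((IH j (Finset.mem_range.mp hj)).sub tendsto_const_nhds)
      simpa using this
    have hAe : ∀ᶠ n in atTop, ‖(∫ ω, z ^ X n ω ∂μ) - ∫ ω, z ^ Y ω ∂μ‖ < ε/4 * z ^ k := by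
      have := Metric.tendsto_nhds.mp hA (ε/4 * z ^ k) (by positivity)
      simpa [Real.dist_eq] using this
    have hBe : ∀ᶠ n in atTop, ‖∑ j ∈ Finset.range k, z ^ j * (p n j - q j)‖ < ε/4 * z ^ k := by
      have := Metric.tendsto_nhds.mp hB (ε/4 * z ^ k) (by positivity)
      simpa [Real.dist_eq] using this
    filter_upwards [hAe, hBe] with n hAn hBn
    have hRn := aux_tail (μ := μ) (X n) (hX n) hz0.le hz1.le k
    have hR := aux_tail (μ := μ) Y hY hz0.le hz1.le k
    have hRd : |(∫ ω in {ω | k < X n ω}, z ^ X n ω ∂μ) - ∫ ω in {ω | k < Y ω}, z ^ Y ω ∂μ|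
        ≤ z ^ (k+1) := by
      rw [abs_sub_le_iff]
      constructor <;> [skip; skip] <;>
        · obtain ⟨a1, a2⟩ := hRn; obtain ⟨b1, b2⟩ := hR; linarith
    have hbound : |(p n k - q k) * z ^ k| ≤ ε/4 * z ^ k + ε/4 * z ^ k + z ^ (k+1) := by
      rw [key n]
      calc |_| ≤ ‖(∫ ω, z ^ X n ω ∂μ) - ∫ ω, z ^ Y ω ∂μ‖
            + ‖∑ j ∈ Finset.range k, z ^ j * (p n j - q j)‖
            + |(∫ ω in {ω | k < X n ω}, z ^ X n ω ∂μ) - ∫ ω in {ω | k < Y ω}, z ^ Y ω ∂μ| := by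
            simp only [Real.norm_eq_abs]
            exact (abs_sub _ _).trans (by gcongr; exact abs_sub _ _)
        _ ≤ ε/4 * z ^ k + ε/4 * z ^ k + z ^ (k+1) := by
            have h1 := hAn.le; have h2 := hBn.le
            rw [Real.norm_eq_abs] at h1 h2
            linarith
    rw [abs_mul, abs_of_pos hzk] at hbound
    have hzk1 : z ^ (k+1) ≤ ε/4 * z ^ k := by
      rw [pow_succ, mul_comm]
      exact mul_le_mul_of_nonneg_right hzε hzk.le
    have : |p n k - q k| * z ^ k < ε * z ^ k := by nlinarith
    rw [Real.norm_eq_abs]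
    exact lt_of_mul_lt_mul_right this hzk.le
  have := hd0.add (tendsto_const_nhds (x := q k))
  simpa using this
end

section
/- Let X be a nonnegative random variable, β ≥ 0, and let Λ be a measure on (0,∞) with ∫₀^∞ min{x,1} Λ(dx) < ∞; set Ψ(u) = βu + ∫₀^∞ (1 − e^{−ux}) Λ(dx). If E[exp(−u·X)] = exp(−Ψ(u)) holds for all u ∈ [0,1], then E[exp(−u·X)] = exp(−Ψ(u)) holds for all u ≥ 0. -/
open MeasureTheory Real Set
open scoped ENNReal NNReal

lemma texp_le_one {t : ℝ} (_ht : 0 ≤ t) : t * Real.exp (-t) ≤ 1 := by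
  rw [Real.exp_neg]
  have h := Real.add_one_le_exp t
  have hp := Real.exp_pos t
  rw [mul_inv_le_iff₀ hp, one_mul]
  linarith

lemma xexp_le {ε x : ℝ} (hε : 0 < ε) (hx : 0 ≤ x) :
    x * Real.exp (-ε * x) ≤ ε⁻¹ := by
  rw [neg_mul]
  have := texp_le_one (mul_nonneg hε.le hx)
  rw [inv_eq_one_div, le_div_iff₀ hε]
  calc x * Real.exp (-(ε * x)) * ε = ε * x * Real.exp (-(ε * x)) := by ring
  _ ≤ 1 := this

lemma xexp_le_min {ε x : ℝ} (hε : 0 < ε) (hx : 0 ≤ x) :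
    x * Real.exp (-ε * x) ≤ max ε⁻¹ 1 * min x 1 := by
  rcases le_total x 1 with hx1 | hx1
  · calc x * Real.exp (-ε * x) ≤ x * 1 := by
          have := Real.exp_le_one_iff.2 (by nlinarith : -ε * x ≤ 0)
          exact mul_le_mul_of_nonneg_left this hx
    _ = min x 1 := by rw [mul_one, min_eq_left hx1]
    _ ≤ max ε⁻¹ 1 * min x 1 := by
        nlinarith [le_max_right ε⁻¹ (1:ℝ), min_le_left x 1, hx, min_eq_left hx1]
  · calc x * Real.exp (-ε * x) ≤ ε⁻¹ := xexp_le hε hx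
    _ = ε⁻¹ * min x 1 := by rw [min_eq_right hx1, mul_one]
    _ ≤ max ε⁻¹ 1 * min x 1 := by
        have : (0:ℝ) ≤ min x 1 := le_min (by linarith) one_pos.le
        exact mul_le_mul_of_nonneg_right (le_max_left _ _) this

lemma one_sub_exp_abs {u x : ℝ} (hu : 0 ≤ u) (hx : 0 ≤ x) :
    |1 - Real.exp (-u * x)| ≤ max u 1 * min x 1 := by
  have ht : 0 ≤ u * x := mul_nonneg hu hx
  have h1 : Real.exp (-u * x) ≤ 1 := Real.exp_le_one_iff.2 (by nlinarith)
  have h2 : 1 - (u * x) ≤ Real.exp (-u * x) := by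
    have := Real.add_one_le_exp (-(u * x))
    rw [neg_mul]; linarith
  rw [abs_of_nonneg (by linarith)]
  rcases le_total x 1 with hx1 | hx1
  · calc 1 - Real.exp (-u * x) ≤ u * x := by linarith
    _ ≤ max u 1 * min x 1 := by
        rw [min_eq_left hx1]
        exact mul_le_mul_of_nonneg_right (le_max_left _ _) hx
  · calc 1 - Real.exp (-u * x) ≤ 1 := by linarith [(Real.exp_pos (-u * x)).le]
    _ ≤ max u 1 * min x 1 := by
        rw [min_eq_right hx1, mul_one]
        exact le_max_right _ _



lemma laplace_analyticAt {Ω : Type*} [MeasurableSpace Ω] (ν : Measure Ω) (Y : Ω → ℝ)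
    (hY : Measurable Y) (hYnn : ∀ᵐ ω ∂ν, 0 ≤ Y ω) {u₀ : ℝ} (hu₀ : 0 < u₀)
    (hint : Integrable (fun ω => Real.exp (-(u₀ / 2) * Y ω)) ν) :
    AnalyticAt ℝ (fun u => ∫ ω, Real.exp (-u * Y ω) ∂ν) u₀ := by
  set c : ℝ := u₀ / 2 with hc_def
  have hc : 0 < c := by positivity
  -- pointwise bound on the integrands
  have key : ∀ n : ℕ, ∀ᵐ ω ∂ν, ‖Y ω ^ n * Real.exp (-u₀ * Y ω)‖
      ≤ (n.factorial / c ^ n) * Real.exp (-c * Y ω) := by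
    intro n
    filter_upwards [hYnn] with ω hω
    have h1 : (c * Y ω) ^ n / n.factorial ≤ Real.exp (c * Y ω) :=
      Real.pow_div_factorial_le_exp _ (by positivity) n
    have h2 : Y ω ^ n ≤ (n.factorial / c ^ n) * Real.exp (c * Y ω) := by
      rw [div_mul_eq_mul_div, le_div_iff₀ (by positivity : (0:ℝ) < c ^ n)]
      rw [mul_pow, div_le_iff₀ (by positivity : (0:ℝ) < (n.factorial : ℝ))] at h1
      nlinarith [h1]
    have h3 : Real.exp (c * Y ω) * Real.exp (-u₀ * Y ω) = Real.exp (-c * Y ω) := by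
      rw [← Real.exp_add, hc_def]; ring_nf
    rw [norm_mul, norm_pow, Real.norm_eq_abs, Real.norm_eq_abs, abs_of_nonneg hω,
      abs_of_nonneg (Real.exp_pos _).le]
    calc Y ω ^ n * Real.exp (-u₀ * Y ω)
        ≤ (n.factorial / c ^ n) * Real.exp (c * Y ω) * Real.exp (-u₀ * Y ω) :=
          mul_le_mul_of_nonneg_right h2 (Real.exp_pos _).le
      _ = (n.factorial / c ^ n) * Real.exp (-c * Y ω) := by rw [mul_assoc, h3]
  have hmeas : ∀ n : ℕ, AEStronglyMeasurable (fun ω => Y ω ^ n * Real.exp (-u₀ * Y ω)) ν :=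
    fun n => ((hY.pow_const n).mul ((hY.const_mul (-u₀)).exp)).aestronglyMeasurable
  have hgint : ∀ n : ℕ, Integrable (fun ω => Y ω ^ n * Real.exp (-u₀ * Y ω)) ν := by
    intro n
    refine Integrable.mono' (hint.const_mul (n.factorial / c ^ n)) (hmeas n) ?_
    filter_upwards [key n] with ω hω
    simpa [hc_def] using hω
  set A : ℕ → ℝ := fun n => ∫ ω, Y ω ^ n * Real.exp (-u₀ * Y ω) ∂ν with hA_def
  set I : ℝ := ∫ ω, Real.exp (-c * Y ω) ∂ν with hI_def
  have hI_eq : Integrable (fun ω => Real.exp (-c * Y ω)) ν := by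
    simpa [hc_def, neg_mul] using hint
  have hInn : 0 ≤ I := integral_nonneg fun ω => (Real.exp_pos _).le
  have hA_bound : ∀ n : ℕ, |A n| ≤ (n.factorial / c ^ n) * I := by
    intro n
    calc |A n| ≤ ∫ ω, ‖Y ω ^ n * Real.exp (-u₀ * Y ω)‖ ∂ν := by
          rw [← Real.norm_eq_abs]; exact norm_integral_le_integral_norm _
      _ ≤ ∫ ω, (n.factorial / c ^ n) * Real.exp (-c * Y ω) ∂ν :=
          integral_mono_ae (hgint n).norm (hI_eq.const_mul _) (key n)
      _ = (n.factorial / c ^ n) * I := by rw [integral_const_mul]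
  set cf : ℕ → ℝ := fun n => (-1) ^ n * A n / n.factorial with hcf_def
  set p : FormalMultilinearSeries ℝ ℝ ℝ :=
    fun n => ContinuousMultilinearMap.mkPiRing ℝ (Fin n) (cf n) with hp_def
  have hpn : ∀ n, ‖p n‖ = |cf n| := by
    intro n
    rw [hp_def]
    simpa using ContinuousMultilinearMap.norm_mkPiRing (𝕜 := ℝ) (ι := Fin n) (G := ℝ) (cf n)
  have hub : ∀ n : ℕ, ‖p n‖ * c ^ n ≤ I := by
    intro n
    rw [hpn n, hcf_def]
    have : |(-1 : ℝ) ^ n * A n / n.factorial| = |A n| / n.factorial := by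
      rw [abs_div, abs_mul, abs_pow, abs_neg, abs_one, one_pow, one_mul, Nat.abs_cast]
    rw [this, div_mul_eq_mul_div, div_le_iff₀ (by positivity : (0:ℝ) < (n.factorial : ℝ))]
    calc |A n| * c ^ n ≤ (n.factorial / c ^ n) * I * c ^ n :=
          mul_le_mul_of_nonneg_right (hA_bound n) (by positivity)
      _ = I * n.factorial := by field_simp
  refine HasFPowerSeriesOnBall.analyticAt (p := p) (r := ENNReal.ofReal c) ?_
  constructor
  · -- r ≤ radius
    have : ENNReal.ofReal c = (c.toNNReal : ℝ≥0∞) := by simp [ENNReal.ofReal]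
    rw [this]
    refine p.le_radius_of_bound I fun n => ?_
    calc ‖p n‖ * (c.toNNReal : ℝ) ^ n = ‖p n‖ * c ^ n := by
          rw [Real.coe_toNNReal _ hc.le]
      _ ≤ I := hub n
  · exact ENNReal.ofReal_pos.2 hc
  · intro y hy
    have hyc : |y| < c := by
      rw [EMetric.mem_ball] at hy
      rw [edist_dist, ENNReal.ofReal_lt_ofReal_iff hc] at hy
      simpa [Real.dist_eq] using hy
    set F : ℕ → Ω → ℝ :=
      fun n ω => ((-y) ^ n / n.factorial) * (Y ω ^ n * Real.exp (-u₀ * Y ω)) with hF_def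
    have hFint : ∀ n, Integrable (F n) ν := fun n => (hgint n).const_mul _
    have hFnorm : ∀ n, (∫ ω, ‖F n ω‖ ∂ν) ≤ (|y| / c) ^ n * I := by
      intro n
      have e1 : ∀ ω, ‖F n ω‖ = (|y| ^ n / n.factorial) * ‖Y ω ^ n * Real.exp (-u₀ * Y ω)‖ := by
        intro ω
        rw [hF_def, norm_mul]
        congr 1
        rw [Real.norm_eq_abs, abs_div, abs_pow, abs_neg, Nat.abs_cast]
      calc (∫ ω, ‖F n ω‖ ∂ν)
          = (|y| ^ n / n.factorial) * ∫ ω, ‖Y ω ^ n * Real.exp (-u₀ * Y ω)‖ ∂ν := by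
            simp_rw [e1]; rw [integral_const_mul]
        _ ≤ (|y| ^ n / n.factorial) * ((n.factorial / c ^ n) * I) := by
            refine mul_le_mul_of_nonneg_left ?_ (by positivity)
            calc (∫ ω, ‖Y ω ^ n * Real.exp (-u₀ * Y ω)‖ ∂ν)
                ≤ ∫ ω, (n.factorial / c ^ n) * Real.exp (-c * Y ω) ∂ν :=
                  integral_mono_ae (hgint n).norm (hI_eq.const_mul _) (key n)
              _ = (n.factorial / c ^ n) * I := by rw [integral_const_mul]
        _ = (|y| / c) ^ n * I := by
            have hn : (0:ℝ) < n.factorial := by positivity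
            rw [div_pow |y| c n, ← mul_assoc, div_mul_div_cancel₀ hn.ne']
    have hsum : Summable fun n => ∫ ω, ‖F n ω‖ ∂ν := by
      refine Summable.of_nonneg_of_le
        (fun n => integral_nonneg fun ω => norm_nonneg _) hFnorm ?_
      exact (summable_geometric_of_lt_one (by positivity)
        ((div_lt_one hc).2 hyc)).mul_right I
    have hs := hasSum_integral_of_summable_integral_norm hFint hsum
    have hexp : ∀ x : ℝ, (∑' n : ℕ, x ^ n / n.factorial) = Real.exp x := by
      intro x
      rw [Real.exp_eq_exp_ℝ, NormedSpace.exp_eq_tsum_div]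
    have e2 : (∫ ω, ∑' n, F n ω ∂ν) = ∫ ω, Real.exp (-(u₀ + y) * Y ω) ∂ν := by
      refine integral_congr_ae (ae_of_all _ fun ω => ?_)
      calc (∑' n, F n ω)
          = (∑' n, (-y * Y ω) ^ n / n.factorial) * Real.exp (-u₀ * Y ω) := by
            rw [← tsum_mul_right]
            exact tsum_congr fun n => by rw [hF_def, mul_pow]; ring
        _ = Real.exp (-y * Y ω) * Real.exp (-u₀ * Y ω) := by rw [hexp]
        _ = Real.exp (-(u₀ + y) * Y ω) := by rw [← Real.exp_add]; ring_nf
    have e3 : (fun n => (p n) fun _ => y) = fun n => ∫ ω, F n ω ∂ν := by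
      funext n
      rw [hp_def]
      have : (ContinuousMultilinearMap.mkPiRing ℝ (Fin n) (cf n)) (fun _ => y)
          = y ^ n * cf n := by
        rw [ContinuousMultilinearMap.mkPiRing_apply, smul_eq_mul]
        simp [Finset.prod_const]
      rw [this, hF_def]
      simp_rw [integral_const_mul]
      have hAn : (∫ a, Y a ^ n * Real.exp (-u₀ * Y a) ∂ν) = A n := rfl
      rw [hAn, hcf_def]
      show y ^ n * ((-1) ^ n * A n / n.factorial) = (-y) ^ n / n.factorial * A n
      rw [neg_pow]; ring
    rw [e3]
    show HasSum (fun n => ∫ ω, F n ω ∂ν) (∫ ω, Real.exp (-(u₀ + y) * Y ω) ∂ν)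
    rwa [← e2]


/-- If the Laplace transform of a nonnegative random variable `X` agrees with
`exp (-Ψ u)` for all `u ∈ [0, 1]`, where `Ψ u = β u + ∫ (1 - e^{-ux}) Λ(dx)` is a
Laplace exponent, then the identity extends to all `u ≥ 0`. -/
theorem laplace_identity_extends {Ω : Type*} [MeasurableSpace Ω]
    (μ : Measure Ω) [IsProbabilityMeasure μ] (X : Ω → ℝ)
    (hXmeas : Measurable X) (hXnonneg : ∀ᵐ ω ∂μ, 0 ≤ X ω)
    (β : ℝ) (hβ : 0 ≤ β) (Λ : Measure ℝ) (hΛsupp : Λ (Set.Iic 0) = 0)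
    (hΛ : (∫⁻ x in Set.Ioi (0 : ℝ), ENNReal.ofReal (min x 1) ∂Λ) < ⊤)
    (h : ∀ u ∈ Set.Icc (0 : ℝ) 1,
      (∫ ω, Real.exp (-u * X ω) ∂μ) =
        Real.exp (-(β * u + ∫ x in Set.Ioi (0 : ℝ), (1 - Real.exp (-u * x)) ∂Λ))) :
    ∀ u : ℝ, 0 ≤ u →
      (∫ ω, Real.exp (-u * X ω) ∂μ) =
        Real.exp (-(β * u + ∫ x in Set.Ioi (0 : ℝ), (1 - Real.exp (-u * x)) ∂Λ)) := by
  set NU : Measure ℝ := Λ.restrict (Set.Ioi 0) with hNU_def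
  have hxpos : ∀ᵐ x ∂NU, x ∈ Set.Ioi (0:ℝ) := ae_restrict_mem measurableSet_Ioi
  -- integrability of the basic bound
  have hmin : Integrable (fun x => min x 1) NU := by
    refine ⟨(measurable_id.min measurable_const).aestronglyMeasurable, ?_⟩
    rw [hasFiniteIntegral_iff_norm]
    have : (∫⁻ x, ENNReal.ofReal ‖min x 1‖ ∂NU)
        = ∫⁻ x, ENNReal.ofReal (min x 1) ∂NU := by
      refine lintegral_congr_ae ?_
      filter_upwards [hxpos] with x hx
      rw [Real.norm_eq_abs, abs_of_nonneg (le_min (le_of_lt hx) one_pos.le)]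
    rw [this]
    exact hΛ
  -- notation
  set f : ℝ → ℝ := fun u => ∫ ω, Real.exp (-u * X ω) ∂μ with hf_def
  set C : ℝ → ℝ := fun u => ∫ x, (1 - Real.exp (-u * x)) ∂NU with hC_def
  set L : ℝ → ℝ := fun u => ∫ x, x * Real.exp (-u * x) ∂NU with hL_def
  set M : ℝ → ℝ := fun u => ∫ ω, X ω * Real.exp (-u * X ω) ∂μ with hM_def
  -- integrability of exp(-vX)
  have hint_f : ∀ v : ℝ, 0 ≤ v → Integrable (fun ω => Real.exp (-v * X ω)) μ := by
    intro v hv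
    refine Integrable.mono' (integrable_const 1)
      ((hXmeas.const_mul (-v)).exp).aestronglyMeasurable ?_
    filter_upwards [hXnonneg] with ω hω
    rw [Real.norm_eq_abs, abs_of_nonneg (Real.exp_pos _).le]
    exact Real.exp_le_one_iff.2 (by nlinarith)
  -- positivity of f
  have hf_pos : ∀ v : ℝ, 0 ≤ v → 0 < f v := by
    intro v hv
    have hfi := hint_f v hv
    show (0:ℝ) < ∫ ω, Real.exp (-v * X ω) ∂μ
    rw [integral_pos_iff_support_of_nonneg_ae
      (ae_of_all _ fun ω => (Real.exp_pos _).le) hfi]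
    have hsupp : (Function.support fun ω => Real.exp (-v * X ω)) = Set.univ := by
      ext ω; simp [Function.support, (Real.exp_pos (-v * X ω)).ne']
    rw [hsupp]
    simp
  -- analyticity of f
  have hf_an : ∀ v : ℝ, 0 < v → AnalyticAt ℝ f v := by
    intro v hv
    refine laplace_analyticAt μ X hXmeas hXnonneg hv ?_
    refine Integrable.mono' (integrable_const 1)
      ((hXmeas.const_mul (-(v/2))).exp).aestronglyMeasurable ?_
    filter_upwards [hXnonneg] with ω hω
    rw [Real.norm_eq_abs, abs_of_nonneg (Real.exp_pos _).le]
    exact Real.exp_le_one_iff.2 (by nlinarith)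
  -- analyticity of M
  set νM : Measure Ω := μ.withDensity (fun ω => ((X ω).toNNReal : ℝ≥0∞)) with hνM_def
  have hXtoNN : Measurable fun ω => (X ω).toNNReal := hXmeas.real_toNNReal
  have hM_eq : ∀ v : ℝ, (∫ ω, Real.exp (-v * X ω) ∂νM) = M v := by
    intro v
    rw [hνM_def, integral_withDensity_eq_integral_smul hXtoNN]
    refine integral_congr_ae ?_
    filter_upwards [hXnonneg] with ω hω
    rw [NNReal.smul_def, smul_eq_mul, Real.coe_toNNReal _ hω]
  have hνM_null : νM {ω | X ω < 0} = 0 := by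
    have hs : MeasurableSet {ω | X ω < 0} := measurableSet_lt hXmeas measurable_const
    rw [hνM_def, withDensity_apply _ hs]
    calc (∫⁻ ω in {ω | X ω < 0}, ((X ω).toNNReal : ℝ≥0∞) ∂μ)
        = ∫⁻ _ω in {ω | X ω < 0}, 0 ∂μ := by
          refine setLIntegral_congr_fun hs (fun ω hω => ?_)
          simp [Real.toNNReal_of_nonpos (le_of_lt hω)]
      _ = 0 := by simp
  have hνM_nn : ∀ᵐ ω ∂νM, 0 ≤ X ω := by
    rw [ae_iff]
    simpa [not_le] using hνM_null
  have hM_an : ∀ v : ℝ, 0 < v → AnalyticAt ℝ M v := by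
    intro v hv
    have hint : Integrable (fun ω => Real.exp (-(v/2) * X ω)) νM := by
      rw [hνM_def, integrable_withDensity_iff_integrable_smul hXtoNN]
      simp_rw [NNReal.smul_def, smul_eq_mul]
      refine Integrable.mono' (integrable_const ((v/2)⁻¹))
        (((measurable_coe_nnreal_real.comp hXtoNN).mul
          ((hXmeas.const_mul (-(v/2))).exp)).aestronglyMeasurable) ?_
      filter_upwards [hXnonneg] with ω hω
      rw [Real.norm_eq_abs, Real.coe_toNNReal _ hω,
        abs_of_nonneg (mul_nonneg hω (Real.exp_pos _).le)]
      exact xexp_le (half_pos hv) hω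
    have := laplace_analyticAt νM X hXmeas hνM_nn hv hint
    rwa [show (fun u => ∫ ω, Real.exp (-u * X ω) ∂νM) = M from funext hM_eq] at this
  -- analyticity of L
  set νL : Measure ℝ := NU.withDensity (fun x => (x.toNNReal : ℝ≥0∞)) with hνL_def
  have hidNN : Measurable fun x : ℝ => x.toNNReal := measurable_id.real_toNNReal
  have hL_eq : ∀ v : ℝ, (∫ x, Real.exp (-v * x) ∂νL) = L v := by
    intro v
    rw [hνL_def, integral_withDensity_eq_integral_smul hidNN]
    refine integral_congr_ae ?_
    filter_upwards [hxpos] with x hx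
    rw [NNReal.smul_def, smul_eq_mul, Real.coe_toNNReal _ (le_of_lt hx)]
  have hνL_nn : ∀ᵐ x ∂νL, 0 ≤ x := by
    have hs : MeasurableSet {x : ℝ | x < 0} := measurableSet_lt measurable_id measurable_const
    have hNUnull : NU {x : ℝ | x < 0} = 0 := by
      rw [hNU_def, Measure.restrict_apply hs]
      have hempty : {x : ℝ | x < 0} ∩ Set.Ioi 0 = ∅ := by
        ext x
        simp only [Set.mem_inter_iff, Set.mem_setOf_eq, Set.mem_Ioi,
          Set.mem_empty_iff_false, iff_false, not_and]
        intro h1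
        linarith
      rw [hempty, measure_empty]
    have : νL {x : ℝ | x < 0} = 0 := by
      rw [hνL_def, withDensity_apply _ hs]
      exact setLIntegral_measure_zero _ _ hNUnull
    rw [ae_iff]
    simpa [not_le] using this
  have hL_an : ∀ v : ℝ, 0 < v → AnalyticAt ℝ L v := by
    intro v hv
    have hint : Integrable (fun x => Real.exp (-(v/2) * x)) νL := by
      rw [hνL_def, integrable_withDensity_iff_integrable_smul hidNN]
      simp_rw [NNReal.smul_def, smul_eq_mul]
      refine Integrable.mono' (hmin.const_mul (max (v/2)⁻¹ 1))
        (((measurable_coe_nnreal_real.comp hidNN).mul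
          ((measurable_id.const_mul (-(v/2))).exp)).aestronglyMeasurable) ?_
      filter_upwards [hxpos] with x hx
      rw [Real.norm_eq_abs, Real.coe_toNNReal _ (le_of_lt hx),
        abs_of_nonneg (mul_nonneg (le_of_lt hx) (Real.exp_pos _).le)]
      exact xexp_le_min (half_pos hv) (le_of_lt hx)
    have := laplace_analyticAt νL (fun x => x) measurable_id hνL_nn hv hint
    rwa [show (fun u => ∫ x, Real.exp (-u * x) ∂νL) = L from funext hL_eq] at this
  -- derivative of f
  have hf_deriv : ∀ v : ℝ, 0 < v → HasDerivAt f (-(M v)) v := by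
    intro v hv
    have hder := (hasDerivAt_integral_of_dominated_loc_of_deriv_le (μ := μ)
      (F := fun t ω => Real.exp (-t * X ω))
      (F' := fun t ω => -(X ω * Real.exp (-t * X ω)))
      (x₀ := v) (bound := fun _ => (v/2)⁻¹) (Metric.ball_mem_nhds v (half_pos hv))
      (Filter.Eventually.of_forall fun t =>
        ((hXmeas.const_mul (-t)).exp).aestronglyMeasurable)
      (hint_f v (le_of_lt hv))
      ((hXmeas.mul ((hXmeas.const_mul (-v)).exp)).neg.aestronglyMeasurable)
      ?_ (integrable_const _) ?_).2
    · have : (∫ ω, -(X ω * Real.exp (-v * X ω)) ∂μ) = -(M v) := by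
        rw [integral_neg]
      rwa [this] at hder
    · filter_upwards [hXnonneg] with ω hω
      intro t ht
      rw [Metric.mem_ball, Real.dist_eq, abs_sub_lt_iff] at ht
      have htv : v/2 < t := by linarith [ht.2]
      rw [norm_neg, Real.norm_eq_abs, abs_of_nonneg (mul_nonneg hω (Real.exp_pos _).le)]
      calc X ω * Real.exp (-t * X ω) ≤ X ω * Real.exp (-(v/2) * X ω) := by
            refine mul_le_mul_of_nonneg_left (Real.exp_le_exp.2 ?_) hω
            nlinarith
        _ ≤ (v/2)⁻¹ := xexp_le (half_pos hv) hω
    · filter_upwards [hXnonneg] with ω hω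
      intro t ht
      have hd : HasDerivAt (fun t : ℝ => Real.exp (-t * X ω))
          (Real.exp (-t * X ω) * (-1 * X ω)) t :=
        (((hasDerivAt_id t).neg.mul_const (X ω)).exp)
      refine hd.congr_deriv ?_
      ring
  -- derivative of C
  have hC_deriv : ∀ v : ℝ, 0 < v → HasDerivAt C (L v) v := by
    intro v hv
    have hCint : Integrable (fun x => 1 - Real.exp (-v * x)) NU := by
      refine Integrable.mono' (hmin.const_mul (max v 1))
        (((measurable_const.sub
          ((measurable_id.const_mul (-v)).exp))).aestronglyMeasurable) ?_
      filter_upwards [hxpos] with x hx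
      rw [Real.norm_eq_abs]
      exact one_sub_exp_abs (le_of_lt hv) (le_of_lt hx)
    have hder := (hasDerivAt_integral_of_dominated_loc_of_deriv_le (μ := NU)
      (F := fun t x => 1 - Real.exp (-t * x))
      (F' := fun t x => x * Real.exp (-t * x))
      (x₀ := v) (bound := fun x => max (v/2)⁻¹ 1 * min x 1) (Metric.ball_mem_nhds v (half_pos hv))
      (Filter.Eventually.of_forall fun t =>
        ((measurable_const.sub ((measurable_id.const_mul (-t)).exp))).aestronglyMeasurable)
      hCint
      ((measurable_id.mul ((measurable_id.const_mul (-v)).exp)).aestronglyMeasurable)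
      ?_ (hmin.const_mul _) ?_).2
    · exact hder
    · filter_upwards [hxpos] with x hx
      have hx0 : (0:ℝ) < x := hx
      intro t ht
      rw [Metric.mem_ball, Real.dist_eq, abs_sub_lt_iff] at ht
      have htv : v/2 < t := by linarith [ht.2]
      rw [Real.norm_eq_abs, abs_of_nonneg (mul_nonneg (le_of_lt hx) (Real.exp_pos _).le)]
      calc x * Real.exp (-t * x) ≤ x * Real.exp (-(v/2) * x) := by
            refine mul_le_mul_of_nonneg_left (Real.exp_le_exp.2 ?_) (le_of_lt hx)
            nlinarith [mul_pos (by linarith : (0:ℝ) < t - v/2) hx0]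
        _ ≤ max (v/2)⁻¹ 1 * min x 1 := xexp_le_min (half_pos hv) (le_of_lt hx)
    · filter_upwards [hxpos] with x hx
      intro t ht
      have hd : HasDerivAt (fun t : ℝ => 1 - Real.exp (-t * x))
          (0 - Real.exp (-t * x) * (-1 * x)) t :=
        (hasDerivAt_const t (1:ℝ)).sub (((hasDerivAt_id t).neg.mul_const x).exp)
      refine hd.congr_deriv ?_
      ring
  -- G and g
  set G : ℝ → ℝ := fun v => Real.log (f v) + (β * v + C v) with hG_def
  set g : ℝ → ℝ := fun v => -(M v) / f v + (β + L v) with hg_def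
  have hG_deriv : ∀ v : ℝ, 0 < v → HasDerivAt G (g v) v := by
    intro v hv
    have hβv : HasDerivAt (fun v : ℝ => β * v) β v := by
      simpa using (hasDerivAt_id v).const_mul β
    exact ((hf_deriv v hv).log (hf_pos v (le_of_lt hv)).ne').add (hβv.add (hC_deriv v hv))
  have hG_eq : ∀ t ∈ Set.Icc (0:ℝ) 1, G t = 0 := by
    intro t ht
    have hft : f t = Real.exp (-(β * t + C t)) := h t ht
    show Real.log (f t) + (β * t + C t) = 0
    rw [hft, Real.log_exp]
    ring
  have hg_an : AnalyticOnNhd ℝ g (Set.Ioi 0) := by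
    intro v hv
    have hv' : (0:ℝ) < v := hv
    exact ((hM_an v hv').neg.div (hf_an v hv') (hf_pos v (le_of_lt hv')).ne').add
      (analyticAt_const.add (hL_an v hv'))
  have hg_ev : g =ᶠ[nhds (1/2 : ℝ)] 0 := by
    have hmem : (1/2 : ℝ) ∈ Set.Ioo (0:ℝ) 1 := by norm_num
    filter_upwards [isOpen_Ioo.eventually_mem hmem] with t ht
    have hGt : ∀ᶠ s in nhds t, G s = 0 := by
      filter_upwards [isOpen_Ioo.eventually_mem ht] with s hs
      exact hG_eq s (Set.Ioo_subset_Icc_self hs)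
    have hzero : HasDerivAt (fun _ : ℝ => (0:ℝ)) (g t) t := by
      refine (hG_deriv t ht.1).congr_of_eventuallyEq ?_
      filter_upwards [hGt] with s hs
      exact hs.symm
    have := hzero.unique (hasDerivAt_const t 0)
    simpa using this
  have hgzero : Set.EqOn g 0 (Set.Ioi 0) :=
    hg_an.eqOn_zero_of_preconnected_of_eventuallyEq_zero isPreconnected_Ioi
      (by norm_num : (1/2 : ℝ) ∈ Set.Ioi (0:ℝ)) hg_ev
  -- conclude
  intro u hu
  rcases le_or_gt u 1 with h1 | h1
  · exact h u ⟨hu, h1⟩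
  · have hGu : G u = 0 := by
      have hconst := constant_of_has_deriv_right_zero (f := G) (a := 1) (b := u)
        (fun t ht => (hG_deriv t (lt_of_lt_of_le zero_lt_one ht.1)).continuousAt.continuousWithinAt)
        (fun t ht => by
          have hgt : g t = 0 := hgzero (lt_of_lt_of_le zero_lt_one ht.1)
          have := hG_deriv t (lt_of_lt_of_le zero_lt_one ht.1)
          rw [hgt] at this
          exact this.hasDerivWithinAt)
      have := hconst u ⟨le_of_lt h1, le_refl u⟩
      rw [this, hG_eq 1 (by norm_num)]
    have hfu : 0 < f u := hf_pos u hu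
    have hGu' : Real.log (f u) + (β * u + C u) = 0 := hGu
    have hlog : Real.log (f u) = -(β * u + C u) := by linarith
    show f u = Real.exp (-(β * u + C u))
    rw [← hlog, Real.exp_log hfu]
end
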